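/- In the Friedrichs construction, dom a is a core for J_F*, i.e. the closure of the restriction of J_F* to dom a equals J_F*. -/

import Mathlib

open scoped ComplexConjugate ComplexOrder InnerProductSpace
noncomputable section

/-- The conjugate dual of a complex normed space: continuous conjugate-linear
functionals. Pairing `(v, x) := v x`. -/
abbrev CDual (X : Type*) [NormedAddCommGroup X] [NormedSpace ℂ X] :=
  X →SL[starRingEnd ℂ] ℂ


/-- A densely defined operator `A : X → X*` is self-adjoint (`A = A*`):
it is densely defined, symmetric (`(Ax,y) = (x,Ay)` i.e. `A ⊆ A*`), and maximal
(any `y` for which `x ↦ (Ax,y)` is represented by some `w ∈ X*` lies in `dom A`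
with `Ay = w`, i.e. `A* ⊆ A`). -/
def IsSelfAdjointOp {X : Type*} [NormedAddCommGroup X] [NormedSpace ℂ X]
    (A : X →ₗ.[ℂ] CDual X) : Prop :=
  Dense (A.domain : Set X) ∧
  (∀ x y : A.domain, A x (y : X) = starRingEnd ℂ (A y (x : X))) ∧
  (∀ (y : X) (w : CDual X),
    (∀ x : A.domain, A x y = starRingEnd ℂ (w (x : X))) →
      ∃ hy : y ∈ A.domain, A ⟨y, hy⟩ = w)

/-- `(Ax, x) ≥ 0` for all `x ∈ dom A` (using the complex order). -/
def IsPositiveOp {X : Type*} [NormedAddCommGroup X] [NormedSpace ℂ X]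
    (A : X →ₗ.[ℂ] CDual X) : Prop :=
  ∀ x : A.domain, 0 ≤ A x (x : X)


open Filter Topology
/-- In the Friedrichs construction for a densely defined positive
operator a with positive lower bound, dom a is a core for J_F*: every
y in dom J_F* is the limit in X of a sequence from dom a whose J_F*-images
converge to J_F* y in H_F; i.e. the closure of the restriction of J_F* to dom a
equals J_F*. -/
theorem statement13
    {X : Type*} [NormedAddCommGroup X] [NormedSpace ℂ X] [CompleteSpace X]
    (a : X →ₗ.[ℂ] CDual X) (hdense : Dense (a.domain : Set X))
    (γ : ℝ) (hγ : 0 < γ)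
    (hlb : ∀ x : a.domain, (↑(γ * ‖(x : X)‖ ^ 2) : ℂ) ≤ a x (x : X))
    {H : Type*} [NormedAddCommGroup H] [InnerProductSpace ℂ H] [CompleteSpace H]
    (φ : a.domain →ₗ[ℂ] H) (hφdense : DenseRange φ)
    (hφ : ∀ x y : a.domain, ⟪φ y, φ x⟫_ℂ = a x (y : X))
    (ι : H →L[ℂ] X) (hιinj : Function.Injective ι)
    (hι : ∀ x : a.domain, ι (φ x) = (x : X))
    (AF : X →ₗ.[ℂ] CDual X) (hext : a ≤ AF)
    (hAFdom : ∀ x : X, x ∈ AF.domain ↔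
      ∃ (hx : H) (z : CDual X), ι hx = x ∧ ∀ y : H, ⟪y, hx⟫_ℂ = z (ι y))
    (hAFval : ∀ (x : AF.domain) (hx : H), ι hx = (x : X) →
      ∀ y : H, ⟪y, hx⟫_ℂ = AF x (ι y))
    {HF : Type*} [NormedAddCommGroup HF] [InnerProductSpace ℂ HF] [CompleteSpace HF]
    (ΦF : AF.domain → HF) (hΦFdense : DenseRange ΦF)
    (hΦF : ∀ x y : AF.domain, ⟪ΦF y, ΦF x⟫_ℂ = AF x (y : X))
    (JF : HF →ₗ.[ℂ] CDual X)
    (hJFdom : ∀ h : HF, h ∈ JF.domain ↔ h ∈ Set.range ΦF)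
    (hJFval : ∀ (x : AF.domain) (hh : ΦF x ∈ JF.domain), JF ⟨ΦF x, hh⟩ = AF x)
    (SF : X →ₗ.[ℂ] HF)
    (hSFdom : ∀ y : X, y ∈ SF.domain ↔
      ∃ k : HF, ∀ h : JF.domain, JF h y = ⟪k, (h : HF)⟫_ℂ)
    (hSFval : ∀ (y : SF.domain) (h : JF.domain), JF h (y : X) = ⟪SF y, (h : HF)⟫_ℂ)
    (hsub : ∀ x : a.domain, (x : X) ∈ SF.domain) :
    ∀ y : SF.domain, ∃ u : ℕ → a.domain,
      Tendsto (fun n => ((u n : X))) atTop (nhds (y : X)) ∧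
      Tendsto (fun n => SF ⟨(u n : X), hsub (u n)⟩) atTop (nhds (SF y)) := by
  classical
  intro y
  -- embedding of dom a into dom AF
  let emb : a.domain → AF.domain := fun x => ⟨(x : X), hext.1 x.2⟩
  have haval : ∀ x : a.domain, a x = AF (emb x) := fun x => hext.2 rfl
  have hJFmem : ∀ z : AF.domain, ΦF z ∈ JF.domain := fun z => (hJFdom _).mpr ⟨z, rfl⟩
  have hAFy : ∀ (w : SF.domain) (z : AF.domain), AF z (w : X) = ⟪SF w, ΦF z⟫_ℂ := by
    intro w z
    have h1 := hSFval w ⟨ΦF z, hJFmem z⟩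
    have h2 := hJFval z (hJFmem z)
    rw [h2] at h1
    exact h1
  have hψ : ∀ z : AF.domain, ∃ hz : H, ι hz = (z : X) ∧
      ∀ v : H, ⟪v, hz⟫_ℂ = AF z (ι v) := by
    intro z
    obtain ⟨hx, w, h1, _⟩ := (hAFdom (z : X)).mp z.2
    exact ⟨hx, h1, hAFval z hx h1⟩
  -- extensionality against the dense range of ΦF
  have hext_inner : ∀ u v : HF,
      (∀ z : AF.domain, ⟪u, ΦF z⟫_ℂ = ⟪v, ΦF z⟫_ℂ) → u = v := by
    intro u v h
    have h0 : ∀ w : HF, ⟪u - v, w⟫_ℂ = 0 := by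
      have hc : IsClosed {w : HF | ⟪u - v, w⟫_ℂ = 0} :=
        isClosed_eq (continuous_const.inner continuous_id) continuous_const
      intro w
      refine hc.closure_subset_iff.mpr ?_ (hΦFdense w)
      rintro _ ⟨z, rfl⟩
      show ⟪u - v, ΦF z⟫_ℂ = 0
      rw [inner_sub_left, h z, sub_self]
    have h1 := h0 (u - v)
    rw [inner_self_eq_zero] at h1
    exact sub_eq_zero.mp h1
  -- SF on dom a equals ΦF ∘ emb
  have hSFa : ∀ x : a.domain, SF ⟨(x : X), hsub x⟩ = ΦF (emb x) := by
    intro x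
    refine hext_inner _ _ fun z => ?_
    have h1 : AF z ((x : X)) = ⟪SF ⟨(x : X), hsub x⟩, ΦF z⟫_ℂ := hAFy ⟨(x : X), hsub x⟩ z
    have h2 : ⟪ΦF (emb x), ΦF z⟫_ℂ = AF z ((emb x : X)) := hΦF z (emb x)
    rw [← h1, h2]
  -- norms in HF of differences with dom a elements are computed in H
  have hnormeq : ∀ (x : a.domain) (z : AF.domain) (hz : H), ι hz = (z : X) →
      (∀ v : H, ⟪v, hz⟫_ℂ = AF z (ι v)) → ‖ΦF (emb x) - ΦF z‖ = ‖φ x - hz‖ := by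
    intro x z hz hzι Pz
    have c1 : ⟪ΦF (emb x), ΦF (emb x)⟫_ℂ = ⟪φ x, φ x⟫_ℂ := by
      rw [hΦF (emb x) (emb x), hφ x x, haval x]
    have c2 : ⟪ΦF (emb x), ΦF z⟫_ℂ = ⟪φ x, hz⟫_ℂ := by
      rw [hΦF z (emb x), Pz (φ x), hι x]
    have c3 : ⟪ΦF z, ΦF (emb x)⟫_ℂ = ⟪hz, φ x⟫_ℂ := by
      rw [hΦF (emb x) z, hAFval (emb x) (φ x) (hι x) hz, hzι]
    have c4 : ⟪ΦF z, ΦF z⟫_ℂ = ⟪hz, hz⟫_ℂ := by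
      rw [hΦF z z, Pz hz, hzι]
    have e : ⟪ΦF (emb x) - ΦF z, ΦF (emb x) - ΦF z⟫_ℂ = ⟪φ x - hz, φ x - hz⟫_ℂ := by
      rw [inner_sub_sub_self, inner_sub_sub_self, c1, c2, c3, c4]
    have e3 : ‖ΦF (emb x) - ΦF z‖ ^ 2 = ‖φ x - hz‖ ^ 2 := by
      rw [norm_sq_eq_re_inner (𝕜 := ℂ), norm_sq_eq_re_inner (𝕜 := ℂ), e]
    calc ‖ΦF (emb x) - ΦF z‖ = Real.sqrt (‖ΦF (emb x) - ΦF z‖ ^ 2) :=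
          (Real.sqrt_sq (norm_nonneg _)).symm
      _ = Real.sqrt (‖φ x - hz‖ ^ 2) := by rw [e3]
      _ = ‖φ x - hz‖ := Real.sqrt_sq (norm_nonneg _)
  -- choose approximating sequence from dom a
  have happrox : ∀ n : ℕ, ∃ x : a.domain,
      dist (SF y) (ΦF (emb x)) < 1 / (n + 1) := by
    intro n
    obtain ⟨z, hz1⟩ := Metric.denseRange_iff.mp hΦFdense (SF y) (1 / (n + 1) / 2)
      (by positivity)
    obtain ⟨hzH, hzι, Pz⟩ := hψ z
    obtain ⟨x, hx1⟩ := Metric.denseRange_iff.mp hφdense hzH (1 / (n + 1) / 2)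
      (by positivity)
    refine ⟨x, ?_⟩
    have hd : dist (ΦF z) (ΦF (emb x)) = dist hzH (φ x) := by
      rw [dist_eq_norm, dist_eq_norm, ← norm_neg (ΦF z - ΦF (emb x)), neg_sub,
        hnormeq x z hzH hzι Pz, ← norm_neg (hzH - φ x), neg_sub]
    have := dist_triangle (SF y) (ΦF z) (ΦF (emb x))
    rw [hd] at this
    linarith
  choose u hu using happrox
  have hk : Tendsto (fun n => ΦF (emb (u n))) atTop (𝓝 (SF y)) := by
    rw [tendsto_iff_dist_tendsto_zero]
    refine squeeze_zero (fun n => dist_nonneg) (fun n => ?_)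
      tendsto_one_div_add_atTop_nhds_zero_nat
    rw [dist_comm]
    exact (hu n).le
  -- the images in H form a Cauchy sequence
  have hdist : ∀ n m, dist (φ (u n)) (φ (u m)) =
      dist (ΦF (emb (u n))) (ΦF (emb (u m))) := by
    intro n m
    have h := hnormeq (u n) (emb (u m)) (φ (u m)) (hι (u m))
      (hAFval (emb (u m)) (φ (u m)) (hι (u m)))
    rw [dist_eq_norm, dist_eq_norm, ← h]
  have hCau : CauchySeq (fun n => φ (u n)) := by
    have hC := hk.cauchySeq
    rw [Metric.cauchySeq_iff] at hC ⊢
    intro ε hε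
    obtain ⟨N, hN⟩ := hC ε hε
    exact ⟨N, fun m hm n hn => by rw [hdist]; exact hN m hm n hn⟩
  obtain ⟨g, hg⟩ := cauchySeq_tendsto_of_complete hCau
  have hxg : Tendsto (fun n => ((u n : X))) atTop (𝓝 (ι g)) := by
    have h := (ι.continuous.tendsto g).comp hg
    simpa [Function.comp_def, hι] using h
  -- AF-functionals agree on ι g and y
  have hAFeq : ∀ z : AF.domain, AF z (ι g) = AF z (y : X) := by
    intro z
    obtain ⟨hzH, hzι, Pz⟩ := hψ z
    have T1 : Tendsto (fun n => AF z ((u n : X))) atTop (𝓝 (AF z (ι g))) := by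
      have h1 : Tendsto (fun n => ⟪φ (u n), hzH⟫_ℂ) atTop (𝓝 ⟪g, hzH⟫_ℂ) :=
        hg.inner tendsto_const_nhds
      have h2 : ∀ n, ⟪φ (u n), hzH⟫_ℂ = AF z ((u n : X)) := fun n => by
        rw [Pz (φ (u n)), hι (u n)]
      have h3 := h1.congr h2
      rwa [Pz g] at h3
    have T2 : Tendsto (fun n => AF z ((u n : X))) atTop (𝓝 (AF z (y : X))) := by
      have h1 : Tendsto (fun n => ⟪ΦF (emb (u n)), ΦF z⟫_ℂ) atTop
          (𝓝 ⟪SF y, ΦF z⟫_ℂ) := hk.inner tendsto_const_nhds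
      have h2 : ∀ n, ⟪ΦF (emb (u n)), ΦF z⟫_ℂ = AF z ((u n : X)) := fun n =>
        hΦF z (emb (u n))
      have h3 := h1.congr h2
      rwa [← hAFy y z] at h3
    exact tendsto_nhds_unique T1 T2
  -- ι has dense range
  have hιdense : DenseRange ι := by
    have hsubr : (a.domain : Set X) ⊆ Set.range ι := fun x hx => ⟨φ ⟨x, hx⟩, hι ⟨x, hx⟩⟩
    exact hdense.mono hsubr
  -- AF is surjective onto CDual X
  have hAFsurj : ∀ w : CDual X, ∃ z : AF.domain, ∀ v : X, AF z v = w v := by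
    intro w
    let g' : H →L[ℂ] ℂ :=
      { toFun := fun v => starRingEnd ℂ (w (ι v))
        map_add' := by intro v₁ v₂; simp
        map_smul' := by intro c v; simp
        cont := continuous_star.comp (w.continuous.comp ι.continuous) }
    set hw : H := (InnerProductSpace.toDual ℂ H).symm g' with hhw
    have hwprop : ∀ v : H, ⟪v, hw⟫_ℂ = w (ι v) := by
      intro v
      have h1 : ⟪hw, v⟫_ℂ = g' v := InnerProductSpace.toDual_symm_apply
      rw [← inner_conj_symm, h1]
      simp [g']
    have hmem : ι hw ∈ AF.domain := (hAFdom (ι hw)).mpr ⟨hw, w, rfl, hwprop⟩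
    refine ⟨⟨ι hw, hmem⟩, ?_⟩
    have hvals : ∀ v : H, AF ⟨ι hw, hmem⟩ (ι v) = w (ι v) := fun v => by
      rw [← hAFval ⟨ι hw, hmem⟩ hw rfl v, hwprop v]
    have heqon : Set.EqOn (fun v : X => AF ⟨ι hw, hmem⟩ v) (fun v => w v)
        (Set.range ι) := by
      rintro _ ⟨v', rfl⟩; exact hvals v'
    have hfe := Continuous.ext_on hιdense (AF ⟨ι hw, hmem⟩).continuous w.continuous heqon
    exact fun v => congrFun hfe v
  -- separation by conjugate-linear functionals
  have hsep : ∀ d : X, (∀ w : CDual X, w d = 0) → d = 0 := by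
    intro d hd
    refine NormedSpace.eq_zero_of_forall_dual_eq_zero ℂ fun f => ?_
    let w : CDual X :=
      { toFun := fun v => starRingEnd ℂ (f v)
        map_add' := by intro a b; simp
        map_smul' := by intro c v; simp
        cont := continuous_star.comp f.continuous }
    have h1 : starRingEnd ℂ (f d) = 0 := hd w
    simpa using congrArg (starRingEnd ℂ) h1
  have hιgy : ι g = (y : X) := by
    have hz0 : ∀ w : CDual X, w (ι g - (y : X)) = 0 := by
      intro w
      obtain ⟨z, hzv⟩ := hAFsurj w
      rw [← hzv, map_sub, hAFeq z, sub_self]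
    exact sub_eq_zero.mp (hsep _ hz0)
  refine ⟨u, ?_, ?_⟩
  · rwa [hιgy] at hxg
  · exact hk.congr fun n => (hSFa (u n)).symm
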